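/- Let p ≥ 1 and let f : 𝕋 → ℝ be continuous on the circle 𝕋 = ℝ/ℤ with 0 ≤ f ≤ 1. For y ∈ [0,1) let E_y = {x ∈ 𝕋 : f(x) > y}. Then for every t ∈ (0,1], ω(f,t)_p ≤ ∫_0^1 (sup_{0 < h ≤ t} τ(h, E_y))^{1/p} dy. -/

import Mathlib

open MeasureTheory Set

/-- The `L^p` modulus of continuity `ω(f,t)_p` on the circle `𝕋 = ℝ/ℤ`. -/
noncomputable def modulus (f : AddCircle (1:ℝ) → ℝ) (p t : ℝ) : ℝ :=
  ⨆ h : {h : ℝ // |h| ≤ t},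
    (∫ x : AddCircle (1:ℝ), |f (x + ((h.1 : ℝ) : AddCircle (1:ℝ))) - f x| ^ p) ^ (1/p)

/-- `τ(h,E)`: the measure of the set where the characteristic function of `E`
translated by `h` differs from itself. -/
noncomputable def tau (h : ℝ) (E : Set (AddCircle (1:ℝ))) : ℝ :=
  (volume {x : AddCircle (1:ℝ) |
    E.indicator (fun _ => (1:ℝ)) (x + ((h : ℝ) : AddCircle (1:ℝ)))
      ≠ E.indicator (fun _ => (1:ℝ)) x}).toReal

open ENNReal

private lemma aux_indicator_ne {E : Set (AddCircle (1:ℝ))} (a b : AddCircle (1:ℝ)) :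
    (E.indicator (fun _ => (1:ℝ)) a ≠ E.indicator (fun _ => (1:ℝ)) b) ↔ ((a ∈ E) ≠ (b ∈ E)) := by
  by_cases ha : a ∈ E <;> by_cases hb : b ∈ E <;> simp [ha, hb]

private lemma aux_tau_nonneg (h : ℝ) (E : Set (AddCircle (1:ℝ))) : 0 ≤ tau h E :=
  ENNReal.toReal_nonneg

private lemma aux_tau_le_one (h : ℝ) (E : Set (AddCircle (1:ℝ))) : tau h E ≤ 1 := by
  have hle : volume {x : AddCircle (1:ℝ) |
      E.indicator (fun _ => (1:ℝ)) (x + ((h : ℝ) : AddCircle (1:ℝ)))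
        ≠ E.indicator (fun _ => (1:ℝ)) x} ≤ 1 := by
    refine le_trans (measure_mono (subset_univ _)) ?_
    simp [AddCircle.measure_univ]
  have := ENNReal.toReal_mono ENNReal.one_ne_top hle
  simpa [tau] using this

private lemma aux_tau_eq (h : ℝ) (E : Set (AddCircle (1:ℝ))) :
    ENNReal.ofReal (tau h E)
      = volume {x : AddCircle (1:ℝ) | ((x + ((h : ℝ) : AddCircle (1:ℝ))) ∈ E) ≠ (x ∈ E)} := by
  have hset : {x : AddCircle (1:ℝ) |
      E.indicator (fun _ => (1:ℝ)) (x + ((h : ℝ) : AddCircle (1:ℝ)))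
        ≠ E.indicator (fun _ => (1:ℝ)) x}
      = {x : AddCircle (1:ℝ) | ((x + ((h : ℝ) : AddCircle (1:ℝ))) ∈ E) ≠ (x ∈ E)} := by
    ext x; exact aux_indicator_ne _ _
  unfold tau
  rw [hset, ENNReal.ofReal_toReal (measure_ne_top _ _)]

private lemma layer_set {a b : ℝ} (hba : b ≤ a) :
    {y : ℝ | (y < a) ≠ (y < b)} = Ico b a := by
  ext y
  simp only [mem_setOf_eq, mem_Ico, ne_eq, eq_iff_iff]
  constructor
  · intro h
    constructor
    · by_contra hyb
      push_neg at hyb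
      exact h (iff_of_true (hyb.trans_le hba) hyb)
    · by_contra hya
      push_neg at hya
      exact h (iff_of_false (not_lt.2 hya) (not_lt.2 (hba.trans hya)))
  · rintro ⟨h1, h2⟩ hiff
    exact absurd (hiff.mp h2) (not_lt.2 h1)

private lemma lintegral_layer {a b : ℝ} (h0a : 0 ≤ a) (ha1 : a ≤ 1) (h0b : 0 ≤ b) (hb1 : b ≤ 1) :
    ∫⁻ y in Ioo (0:ℝ) 1, ({y : ℝ | (y < a) ≠ (y < b)}).indicator (fun _ => (1:ℝ≥0∞)) y
      = ENNReal.ofReal |a - b| := by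
  have key : ∀ a b : ℝ, 0 ≤ b → a ≤ 1 → b ≤ a →
      ∫⁻ y in Ioo (0:ℝ) 1, ({y : ℝ | (y < a) ≠ (y < b)}).indicator (fun _ => (1:ℝ≥0∞)) y
        = ENNReal.ofReal (a - b) := by
    intro a b h0b ha1 hba
    rw [layer_set hba, show (fun _ : ℝ => (1:ℝ≥0∞)) = 1 from rfl,
      lintegral_indicator_one measurableSet_Ico, Measure.restrict_apply measurableSet_Ico]
    refine le_antisymm ?_ ?_
    · calc volume (Ico b a ∩ Ioo 0 1) ≤ volume (Ico b a) := measure_mono inter_subset_left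
        _ = ENNReal.ofReal (a - b) := Real.volume_Ico
    · calc ENNReal.ofReal (a - b) = volume (Ioo b a) := Real.volume_Ioo.symm
        _ ≤ volume (Ico b a ∩ Ioo 0 1) := by
            refine measure_mono fun y hy => ?_
            exact ⟨⟨hy.1.le, hy.2⟩, lt_of_le_of_lt h0b hy.1, lt_of_lt_of_le hy.2 ha1⟩
  rcases le_total b a with hba | hab
  · rw [key a b h0b ha1 hba, abs_of_nonneg (by linarith)]
  · have hsym : {y : ℝ | (y < a) ≠ (y < b)} = {y : ℝ | (y < b) ≠ (y < a)} := by
      ext y; exact ne_comm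
    rw [hsym, key b a h0a hb1 hab, abs_of_nonpos (by linarith), neg_sub]

private lemma vol_neg_shift (P : AddCircle (1:ℝ) → Prop) (c : AddCircle (1:ℝ)) :
    volume {x : AddCircle (1:ℝ) | P (x + -c) ≠ P x}
      = volume {x : AddCircle (1:ℝ) | P (x + c) ≠ P x} := by
  have hset : {x : AddCircle (1:ℝ) | P (x + -c) ≠ P x}
      = (fun x => x + -c) ⁻¹' {x : AddCircle (1:ℝ) | P (x + c) ≠ P x} := by
    ext x
    simp only [mem_preimage, mem_setOf_eq, neg_add_cancel_right]
    exact ne_comm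
  rw [hset, measure_preimage_add_right]

private lemma aux_meas (f : AddCircle (1:ℝ) → ℝ) (hf : Continuous f) (y : ℝ)
    (c : AddCircle (1:ℝ)) :
    MeasurableSet {x : AddCircle (1:ℝ) | (y < f (x + c)) ≠ (y < f x)} := by
  have h1 : IsOpen {x : AddCircle (1:ℝ) | y < f (x + c)} :=
    isOpen_lt continuous_const (hf.comp (continuous_add_right c))
  have h2 : IsOpen {x : AddCircle (1:ℝ) | y < f x} := isOpen_lt continuous_const hf
  have hset : {x : AddCircle (1:ℝ) | (y < f (x + c)) ≠ (y < f x)}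
      = ({x | y < f (x + c)} \ {x | y < f x}) ∪ ({x | y < f x} \ {x | y < f (x + c)}) := by
    ext x
    simp only [mem_setOf_eq, ne_eq, eq_iff_iff, mem_union, mem_diff, mem_setOf_eq]
    tauto
  rw [hset]
  exact (h1.measurableSet.diff h2.measurableSet).union (h2.measurableSet.diff h1.measurableSet)

private lemma key_ineq (p : ℝ) (hp : 1 ≤ p) (f : AddCircle (1:ℝ) → ℝ) (hf : Continuous f)
    (hf0 : ∀ x, 0 ≤ f x) (hf1 : ∀ x, f x ≤ 1) (t : ℝ) (ht0 : 0 < t)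
    (h : ℝ) (hh0 : h ≠ 0) (hht : |h| ≤ t) :
    (∫⁻ x : AddCircle (1:ℝ),
        ENNReal.ofReal (|f (x + ((h : ℝ) : AddCircle (1:ℝ))) - f x| ^ p)) ^ (1/p)
      ≤ ∫⁻ y in Ioo (0:ℝ) 1,
          ENNReal.ofReal ((⨆ h' : Set.Ioc (0:ℝ) t,
            tau (h' : ℝ) {x : AddCircle (1:ℝ) | f x > y}) ^ (1/p)) := by
  have hp0 : (0:ℝ) < p := lt_of_lt_of_le one_pos hp
  set c : AddCircle (1:ℝ) := ((h : ℝ) : AddCircle (1:ℝ)) with hc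
  have hΔ0 : ∀ x : AddCircle (1:ℝ), 0 ≤ |f (x + c) - f x| := fun x => abs_nonneg _
  have hΔ1 : ∀ x : AddCircle (1:ℝ), |f (x + c) - f x| ≤ 1 := fun x => by
    have h1 := hf0 (x + c); have h2 := hf1 (x + c); have h3 := hf0 x; have h4 := hf1 x
    rw [abs_le]; constructor <;> linarith
  -- supremum facts
  have hbdd : ∀ y : ℝ, BddAbove (range fun h' : Set.Ioc (0:ℝ) t =>
      tau (h' : ℝ) {x : AddCircle (1:ℝ) | f x > y}) := fun y =>
    ⟨1, by rintro _ ⟨h', rfl⟩; exact aux_tau_le_one _ _⟩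
  have htauM : ∀ y : ℝ, tau |h| {x : AddCircle (1:ℝ) | f x > y}
      ≤ ⨆ h' : Set.Ioc (0:ℝ) t, tau (h' : ℝ) {x : AddCircle (1:ℝ) | f x > y} := fun y =>
    le_ciSup (hbdd y) (⟨|h|, abs_pos.2 hh0, hht⟩ : Set.Ioc (0:ℝ) t)
  -- the product-space indicator
  set T : Set (AddCircle (1:ℝ) × ℝ) := {z | (z.2 < f (z.1 + c)) ≠ (z.2 < f z.1)} with hT
  have hTm : MeasurableSet T := by
    have h1 : IsOpen {z : AddCircle (1:ℝ) × ℝ | z.2 < f (z.1 + c)} :=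
      isOpen_lt continuous_snd (hf.comp (continuous_fst.add continuous_const))
    have h2 : IsOpen {z : AddCircle (1:ℝ) × ℝ | z.2 < f z.1} :=
      isOpen_lt continuous_snd (hf.comp continuous_fst)
    have hset : T = ({z : AddCircle (1:ℝ) × ℝ | z.2 < f (z.1 + c)} \ {z | z.2 < f z.1})
        ∪ ({z : AddCircle (1:ℝ) × ℝ | z.2 < f z.1} \ {z | z.2 < f (z.1 + c)}) := by
      ext z
      simp only [hT, mem_setOf_eq, ne_eq, eq_iff_iff, mem_union, mem_diff, mem_setOf_eq]
      tauto
    rw [hset]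
    exact (h1.measurableSet.diff h2.measurableSet).union (h2.measurableSet.diff h1.measurableSet)
  set F : AddCircle (1:ℝ) → ℝ → ℝ≥0∞ := fun x y => T.indicator (fun _ => (1:ℝ≥0∞)) (x, y)
    with hF
  have hFm : Measurable (Function.uncurry F) := by
    have huncurry : Function.uncurry F = T.indicator (fun _ => (1:ℝ≥0∞)) := by
      funext z; cases z; rfl
    rw [huncurry]
    exact measurable_const.indicator hTm
  -- layer-cake identity
  have hlayer : ∀ x : AddCircle (1:ℝ),
      ∫⁻ y in Ioo (0:ℝ) 1, F x y = ENNReal.ofReal |f (x + c) - f x| := by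
    intro x
    have hcong : ∫⁻ y in Ioo (0:ℝ) 1, F x y
        = ∫⁻ y in Ioo (0:ℝ) 1,
            ({y : ℝ | (y < f (x + c)) ≠ (y < f x)}).indicator (fun _ => (1:ℝ≥0∞)) y :=
      lintegral_congr fun y => rfl
    rw [hcong, lintegral_layer (hf0 _) (hf1 _) (hf0 _) (hf1 _)]
  -- slice integral
  have hsliceF : ∀ y : ℝ, ∫⁻ x, F x y
      = volume {x : AddCircle (1:ℝ) | (y < f (x + c)) ≠ (y < f x)} := by
    intro y
    have hcong : ∫⁻ x, F x y
        = ∫⁻ x, ({x : AddCircle (1:ℝ) | (y < f (x + c)) ≠ (y < f x)}).indicator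
            (fun _ => (1:ℝ≥0∞)) x := lintegral_congr fun x => rfl
    rw [hcong, show (fun _ : AddCircle (1:ℝ) => (1:ℝ≥0∞)) = 1 from rfl,
      lintegral_indicator_one (aux_meas f hf y c)]
  -- identify the slice with tau |h|
  have hWtau : ∀ y : ℝ, volume {x : AddCircle (1:ℝ) | (y < f (x + c)) ≠ (y < f x)}
      = ENNReal.ofReal (tau |h| {x : AddCircle (1:ℝ) | f x > y}) := by
    intro y
    rw [aux_tau_eq]
    have hmem : ∀ d : AddCircle (1:ℝ),
        {x : AddCircle (1:ℝ) | ((x + d) ∈ {x : AddCircle (1:ℝ) | f x > y}) ≠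
          (x ∈ {x : AddCircle (1:ℝ) | f x > y})}
        = {x : AddCircle (1:ℝ) | (y < f (x + d)) ≠ (y < f x)} := by
      intro d
      ext x
      constructor <;> exact fun hx => hx
    rw [hmem]
    rcases le_or_gt 0 h with hpos | hneg
    · rw [abs_of_nonneg hpos, ← hc]
    · rw [abs_of_neg hneg, show ((-h : ℝ) : AddCircle (1:ℝ)) = -c from by rw [hc]; norm_num]
      exact (vol_neg_shift (fun x => y < f x) c).symm
  -- Fubini
  have hswap : ∀ φ : AddCircle (1:ℝ) → ℝ≥0∞, Measurable φ →
      ∫⁻ x, ∫⁻ y in Ioo (0:ℝ) 1, φ x * F x y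
        = ∫⁻ y in Ioo (0:ℝ) 1, ∫⁻ x, φ x * F x y := fun φ hφ =>
    lintegral_lintegral_swap ((hφ.comp measurable_fst).mul hFm).aemeasurable
  rcases eq_or_lt_of_le hp with hp1 | hp1
  · -- p = 1
    subst hp1
    rw [show (1:ℝ)/1 = 1 by norm_num, ENNReal.rpow_one]
    calc ∫⁻ x : AddCircle (1:ℝ), ENNReal.ofReal (|f (x + c) - f x| ^ (1:ℝ))
        = ∫⁻ x, ∫⁻ y in Ioo (0:ℝ) 1, F x y := by
          refine lintegral_congr fun x => ?_
          rw [hlayer x, Real.rpow_one]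
      _ = ∫⁻ y in Ioo (0:ℝ) 1, ∫⁻ x, F x y := lintegral_lintegral_swap hFm.aemeasurable
      _ ≤ ∫⁻ y in Ioo (0:ℝ) 1, ENNReal.ofReal ((⨆ h' : Set.Ioc (0:ℝ) t,
            tau (h' : ℝ) {x : AddCircle (1:ℝ) | f x > y}) ^ (1:ℝ)) := by
          refine lintegral_mono fun y => ?_
          rw [hsliceF y, hWtau y, Real.rpow_one]
          exact ENNReal.ofReal_le_ofReal (htauM y)
  · -- 1 < p
    have hpne : p - 1 ≠ 0 := by linarith
    have hq : (p/(p-1)).HolderConjugate p := (Real.HolderConjugate.conjExponent hp1).symm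
    set q : ℝ := p/(p-1) with hqdef
    set A : ℝ≥0∞ := ∫⁻ x, ENNReal.ofReal (|f (x + c) - f x|) ^ p with hA
    have hAeq : ∫⁻ x : AddCircle (1:ℝ), ENNReal.ofReal (|f (x + c) - f x| ^ p) = A := by
      refine lintegral_congr fun x => ?_
      rw [ENNReal.ofReal_rpow_of_nonneg (hΔ0 x) hp0.le]
    have hA1 : A ≤ 1 := by
      calc A ≤ ∫⁻ _x : AddCircle (1:ℝ), 1 := lintegral_mono fun x =>
            ENNReal.rpow_le_one (ENNReal.ofReal_le_one.2 (hΔ1 x)) hp0.le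
        _ = 1 := by simp [AddCircle.measure_univ]
    have hAtop : A ≠ ⊤ := (lt_of_le_of_lt hA1 ENNReal.one_lt_top).ne
    have hφm : Measurable fun x : AddCircle (1:ℝ) =>
        ENNReal.ofReal (|f (x + c) - f x|) ^ (p-1) :=
      ((((hf.comp (continuous_add_right c)).sub hf).abs).measurable.ennreal_ofReal).pow_const _
    have hφtop : ∀ x : AddCircle (1:ℝ),
        ENNReal.ofReal (|f (x + c) - f x|) ^ (p-1) ≠ ⊤ := fun x =>
      ENNReal.rpow_ne_top_of_nonneg (by linarith) ENNReal.ofReal_ne_top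
    have step1 : A = ∫⁻ x, ENNReal.ofReal (|f (x + c) - f x|) ^ (p-1)
        * ENNReal.ofReal (|f (x + c) - f x|) := by
      refine lintegral_congr fun x => ?_
      rcases eq_or_lt_of_le (hΔ0 x) with h0 | h0
      · rw [← h0]
        simp [ENNReal.zero_rpow_of_pos hp0,
          ENNReal.zero_rpow_of_pos (by linarith : (0:ℝ) < p - 1)]
      · have hne : ENNReal.ofReal (|f (x + c) - f x|) ≠ 0 := by
          simp only [ne_eq, ENNReal.ofReal_eq_zero, not_le]
          exact h0
        calc ENNReal.ofReal (|f (x + c) - f x|) ^ p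
            = ENNReal.ofReal (|f (x + c) - f x|) ^ ((p-1) + 1) := by norm_num
          _ = ENNReal.ofReal (|f (x + c) - f x|) ^ (p-1)
              * ENNReal.ofReal (|f (x + c) - f x|) ^ (1:ℝ) :=
            ENNReal.rpow_add _ _ hne ENNReal.ofReal_ne_top
          _ = _ := by rw [ENNReal.rpow_one]
    have step2 : A = ∫⁻ y in Ioo (0:ℝ) 1,
        ∫⁻ x, ENNReal.ofReal (|f (x + c) - f x|) ^ (p-1) * F x y := by
      rw [step1]
      have hcong : ∀ x : AddCircle (1:ℝ),
          ENNReal.ofReal (|f (x + c) - f x|) ^ (p-1) * ENNReal.ofReal (|f (x + c) - f x|)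
          = ∫⁻ y in Ioo (0:ℝ) 1, ENNReal.ofReal (|f (x + c) - f x|) ^ (p-1) * F x y := by
        intro x
        rw [lintegral_const_mul' _ _ (hφtop x), hlayer x]
      rw [lintegral_congr hcong]
      exact hswap _ hφm
    have holder : ∀ y : ℝ, ∫⁻ x, ENNReal.ofReal (|f (x + c) - f x|) ^ (p-1) * F x y
        ≤ A ^ (1/q) * ENNReal.ofReal ((⨆ h' : Set.Ioc (0:ℝ) t,
            tau (h' : ℝ) {x : AddCircle (1:ℝ) | f x > y}) ^ (1/p)) := by
      intro y
      have hFym : Measurable fun x => F x y :=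
        hFm.comp (measurable_id.prodMk measurable_const)
      have key := ENNReal.lintegral_mul_le_Lp_mul_Lq volume hq hφm.aemeasurable
        hFym.aemeasurable
      have hφq : ∫⁻ x, (ENNReal.ofReal (|f (x + c) - f x|) ^ (p-1)) ^ q = A := by
        refine lintegral_congr fun x => ?_
        rw [← ENNReal.rpow_mul]
        congr 1
        rw [hqdef]
        field_simp
      have hFp : ∫⁻ x, (F x y) ^ p
          = ENNReal.ofReal (tau |h| {x : AddCircle (1:ℝ) | f x > y}) := by
        have hcong : ∀ x : AddCircle (1:ℝ), (F x y) ^ p = F x y := by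
          intro x
          by_cases hx : (x, y) ∈ T
          · rw [show F x y = 1 from by simp [hF, Set.indicator_of_mem hx], ENNReal.one_rpow]
          · rw [show F x y = 0 from by simp [hF, Set.indicator_of_notMem hx],
              ENNReal.zero_rpow_of_pos hp0]
        rw [lintegral_congr hcong, hsliceF y, hWtau y]
      have hb : (ENNReal.ofReal (tau |h| {x : AddCircle (1:ℝ) | f x > y})) ^ (1/p)
          ≤ ENNReal.ofReal ((⨆ h' : Set.Ioc (0:ℝ) t,
              tau (h' : ℝ) {x : AddCircle (1:ℝ) | f x > y}) ^ (1/p)) := by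
        rw [ENNReal.ofReal_rpow_of_nonneg (aux_tau_nonneg _ _) (one_div_pos.mpr hp0).le]
        exact ENNReal.ofReal_le_ofReal
          (Real.rpow_le_rpow (aux_tau_nonneg _ _) (htauM y) (one_div_pos.mpr hp0).le)
      calc ∫⁻ x, ENNReal.ofReal (|f (x + c) - f x|) ^ (p-1) * F x y
          ≤ (∫⁻ x, (ENNReal.ofReal (|f (x + c) - f x|) ^ (p-1)) ^ q) ^ (1/q)
            * (∫⁻ x, (F x y) ^ p) ^ (1/p) := key
        _ = A ^ (1/q)
            * (ENNReal.ofReal (tau |h| {x : AddCircle (1:ℝ) | f x > y})) ^ (1/p) := by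
            rw [hφq, hFp]
        _ ≤ _ := mul_le_mul_right hb _
    have step3 : A ≤ A ^ (1/q) * ∫⁻ y in Ioo (0:ℝ) 1,
        ENNReal.ofReal ((⨆ h' : Set.Ioc (0:ℝ) t,
          tau (h' : ℝ) {x : AddCircle (1:ℝ) | f x > y}) ^ (1/p)) := by
      calc A = ∫⁻ y in Ioo (0:ℝ) 1,
            ∫⁻ x, ENNReal.ofReal (|f (x + c) - f x|) ^ (p-1) * F x y := step2
        _ ≤ ∫⁻ y in Ioo (0:ℝ) 1, A ^ (1/q) * ENNReal.ofReal ((⨆ h' : Set.Ioc (0:ℝ) t,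
              tau (h' : ℝ) {x : AddCircle (1:ℝ) | f x > y}) ^ (1/p)) :=
          lintegral_mono holder
        _ = _ := lintegral_const_mul' _ _
            (ENNReal.rpow_ne_top_of_nonneg hq.one_div_nonneg hAtop)
    rw [hAeq]
    by_cases hA0 : A = 0
    · rw [hA0, ENNReal.zero_rpow_of_pos (one_div_pos.mpr hp0)]
      exact zero_le
    · have hfact : A ^ (1/q) * A ^ (1/p) = A := by
        rw [← ENNReal.rpow_add _ _ hA0 hAtop]
        rw [show 1/q + 1/p = 1 from by
          rw [one_div, one_div]; simpa using hq.inv_add_inv_eq_inv, ENNReal.rpow_one]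
      have hne0 : A ^ (1/q) ≠ 0 := by
        simp only [ne_eq, ENNReal.rpow_eq_zero_iff, not_or]
        exact ⟨fun hh => hA0 hh.1, fun hh => hAtop hh.1⟩
      have hnetop : A ^ (1/q) ≠ ⊤ := ENNReal.rpow_ne_top_of_nonneg hq.one_div_nonneg hAtop
      have h2 : A ^ (1/q) * A ^ (1/p) ≤ A ^ (1/q) * ∫⁻ y in Ioo (0:ℝ) 1,
          ENNReal.ofReal ((⨆ h' : Set.Ioc (0:ℝ) t,
            tau (h' : ℝ) {x : AddCircle (1:ℝ) | f x > y}) ^ (1/p)) := by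
        calc A ^ (1/q) * A ^ (1/p) = A := hfact
          _ ≤ _ := step3
      exact (ENNReal.mul_le_mul_iff_right hne0 hnetop).1 h2

/-- For `p ≥ 1` and `f` continuous on the circle with `0 ≤ f ≤ 1`,
`ω(f,t)_p ≤ ∫₀¹ (sup_{0 < h ≤ t} τ(h, E_y))^{1/p} dy` for every `t ∈ (0,1]`, where
`E_y = {x : f x > y}`. -/
theorem stmt_6 (p : ℝ) (hp : 1 ≤ p) (f : AddCircle (1:ℝ) → ℝ) (hf : Continuous f)
    (hf0 : ∀ x, 0 ≤ f x) (hf1 : ∀ x, f x ≤ 1) :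
    ∀ t ∈ Set.Ioc (0:ℝ) 1,
      modulus f p t ≤ (∫⁻ y in Set.Ioo (0:ℝ) 1,
        ENNReal.ofReal ((⨆ h : Set.Ioc (0:ℝ) t,
          tau h {x : AddCircle (1:ℝ) | f x > y}) ^ (1/p))).toReal := by
  rintro t ⟨ht0, ht1⟩
  have hp0 : (0:ℝ) < p := lt_of_lt_of_le one_pos hp
  set B : ℝ≥0∞ := ∫⁻ y in Ioo (0:ℝ) 1,
    ENNReal.ofReal ((⨆ h : Set.Ioc (0:ℝ) t,
      tau (h : ℝ) {x : AddCircle (1:ℝ) | f x > y}) ^ (1/p)) with hB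
  have hBtop : B ≠ ⊤ := by
    have hle : B ≤ 1 := by
      calc B ≤ ∫⁻ _y in Ioo (0:ℝ) 1, 1 := by
            refine lintegral_mono fun y => ?_
            refine ENNReal.ofReal_le_one.2 ?_
            exact Real.rpow_le_one (Real.iSup_nonneg fun h' => aux_tau_nonneg _ _)
              (Real.iSup_le (fun h' => aux_tau_le_one _ _) zero_le_one) (one_div_pos.mpr hp0).le
        _ = volume (Ioo (0:ℝ) 1) := by simp
        _ ≤ 1 := by simp [Real.volume_Ioo]
    exact (lt_of_le_of_lt hle ENNReal.one_lt_top).ne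
  unfold modulus
  refine Real.iSup_le ?_ ENNReal.toReal_nonneg
  rintro ⟨h, hh⟩
  by_cases hh0 : h = 0
  · subst hh0
    show (∫ x : AddCircle (1:ℝ), |f (x + (((0:ℝ)) : AddCircle (1:ℝ))) - f x| ^ p) ^ (1/p)
      ≤ B.toReal
    have hz : ∀ x : AddCircle (1:ℝ), |f (x + (((0:ℝ)) : AddCircle (1:ℝ))) - f x| ^ p = 0 := by
      intro x
      rw [show (((0:ℝ)) : AddCircle (1:ℝ)) = 0 from by norm_num, add_zero, sub_self, abs_zero,
        Real.zero_rpow (ne_of_gt hp0)]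
    rw [show (∫ x : AddCircle (1:ℝ), |f (x + (((0:ℝ)) : AddCircle (1:ℝ))) - f x| ^ p) = 0 from by
        simp only [hz]; exact integral_zero _ _,
      Real.zero_rpow (one_div_pos.mpr hp0).ne']
    exact ENNReal.toReal_nonneg
  · show (∫ x : AddCircle (1:ℝ), |f (x + ((h : ℝ) : AddCircle (1:ℝ))) - f x| ^ p) ^ (1/p)
      ≤ B.toReal
    have key := key_ineq p hp f hf hf0 hf1 t ht0 h hh0 hh
    have hcont : Continuous fun x : AddCircle (1:ℝ) =>
        |f (x + ((h : ℝ) : AddCircle (1:ℝ))) - f x| ^ p :=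
      (((hf.comp (continuous_add_right _)).sub hf).abs).rpow_const fun x => Or.inr hp0.le
    have hint : (∫ x : AddCircle (1:ℝ), |f (x + ((h : ℝ) : AddCircle (1:ℝ))) - f x| ^ p)
        = (∫⁻ x : AddCircle (1:ℝ),
            ENNReal.ofReal (|f (x + ((h : ℝ) : AddCircle (1:ℝ))) - f x| ^ p)).toReal := by
      rw [integral_eq_lintegral_of_nonneg_ae
        (Filter.Eventually.of_forall fun x => Real.rpow_nonneg (abs_nonneg _) p)
        hcont.aestronglyMeasurable]
    rw [hint, ENNReal.toReal_rpow]
    exact ENNReal.toReal_mono hBtop key
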